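/- Let C, λ, M, c be positive reals and u a real with |u| ≤ c*M. Then |artanh(C*u / (c*(2λ + C*M)))| ≤ (1/2) * log(1 + C*M/λ). Consequently, for two values u, u' each bounded in absolute value by c*M, |artanh(C*u/(c*(2λ+C*M))) - artanh(C*u'/(c*(2λ+C*M)))| ≤ log(1 + C*M/λ). -/

import Mathlib

/-- The inverse hyperbolic tangent, defined as the inverse of `Real.tanh`. -/
noncomputable def artanh : ℝ → ℝ := Function.invFun Real.tanh

lemma tanh_formula (x : ℝ) :
    Real.tanh x = (Real.exp (2*x) - 1) / (Real.exp (2*x) + 1) := by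
  have h : Real.exp (2*x) = Real.exp x * Real.exp x := by rw [two_mul, Real.exp_add]
  have hx := Real.exp_pos x
  rw [Real.tanh_eq_sinh_div_cosh, Real.sinh_eq, Real.cosh_eq, Real.exp_neg, h]
  field_simp

lemma tanh_strictMono : StrictMono Real.tanh := by
  intro x y hxy
  rw [tanh_formula, tanh_formula]
  have hx := Real.exp_pos (2*x)
  have hy := Real.exp_pos (2*y)
  have h : Real.exp (2*x) < Real.exp (2*y) := Real.exp_lt_exp.mpr (by linarith)
  rw [div_lt_div_iff₀ (by linarith) (by linarith)]
  nlinarith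

lemma tanh_half_log (x : ℝ) (hx : |x| < 1) :
    Real.tanh ((1/2) * Real.log ((1+x)/(1-x))) = x := by
  obtain ⟨h1, h2⟩ := abs_lt.mp hx
  have h1' : 0 < 1 + x := by linarith
  have h2' : 0 < 1 - x := by linarith
  rw [tanh_formula]
  have h3 : 2 * ((1/2) * Real.log ((1+x)/(1-x))) = Real.log ((1+x)/(1-x)) := by ring
  rw [h3, Real.exp_log (by positivity)]
  field_simp
  ring

lemma artanh_eq (x : ℝ) (hx : |x| < 1) :
    artanh x = (1/2) * Real.log ((1+x)/(1-x)) := by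
  have : artanh (Real.tanh ((1/2) * Real.log ((1+x)/(1-x))))
      = (1/2) * Real.log ((1+x)/(1-x)) :=
    Function.leftInverse_invFun tanh_strictMono.injective _
  rw [tanh_half_log x hx] at this
  exact this

lemma key (C lam M : ℝ) (hC : 0 < C) (hlam : 0 < lam) (hM : 0 < M) (x : ℝ)
    (hx : |x| ≤ C*M/(2*lam+C*M)) :
    |artanh x| ≤ (1/2) * Real.log (1 + C*M/lam) := by
  have hden : 0 < 2*lam + C*M := by positivity
  have ha1 : C*M/(2*lam+C*M) < 1 := by
    rw [div_lt_one hden]; linarith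
  obtain ⟨hxl, hxr⟩ := abs_le.mp hx
  have hx1 : |x| < 1 := lt_of_le_of_lt hx ha1
  obtain ⟨h1, h2⟩ := abs_lt.mp hx1
  have h1' : 0 < 1 + x := by linarith
  have h2' : 0 < 1 - x := by linarith
  have ht : 0 < 1 + C*M/lam := by positivity
  rw [artanh_eq x hx1]
  rw [abs_mul, abs_of_pos (by norm_num : (0:ℝ) < 1/2)]
  rw [mul_le_mul_iff_right₀ (by norm_num : (0:ℝ) < 1/2)]
  have hxr' : x * (2*lam + C*M) ≤ C*M := (le_div_iff₀ hden).mp hxr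
  have hxl' : -(C*M) ≤ x * (2*lam + C*M) := by
    have hxl2 : -(C*M)/(2*lam+C*M) ≤ x := by rw [neg_div]; exact hxl
    exact (div_le_iff₀ hden).mp hxl2
  have hteq : 1 + C*M/lam = (lam + C*M)/lam := by field_simp
  have hlcm : 0 < lam + C*M := by positivity
  rw [abs_le]
  constructor
  · rw [← Real.log_inv]
    apply Real.log_le_log (by positivity)
    rw [hteq, inv_div, div_le_div_iff₀ hlcm h2']
    nlinarith
  · apply Real.log_le_log (by positivity)
    rw [hteq, div_le_div_iff₀ h2' hlam]
    nlinarith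

theorem artanh_sensitivity_abs_bound
    (C lam M c : ℝ) (hC : 0 < C) (hlam : 0 < lam) (hM : 0 < M) (hc : 0 < c) :
    (∀ u : ℝ, |u| ≤ c * M →
      |artanh (C * u / (c * (2 * lam + C * M)))| ≤ (1 / 2) * Real.log (1 + C * M / lam)) ∧
    (∀ u u' : ℝ, |u| ≤ c * M → |u'| ≤ c * M →
      |artanh (C * u / (c * (2 * lam + C * M))) - artanh (C * u' / (c * (2 * lam + C * M)))|
        ≤ Real.log (1 + C * M / lam)) := by
  have hden : 0 < 2 * lam + C * M := by positivity
  have main : ∀ u : ℝ, |u| ≤ c * M →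
      |artanh (C * u / (c * (2 * lam + C * M)))| ≤ (1 / 2) * Real.log (1 + C * M / lam) := by
    intro u hu
    apply key C lam M hC hlam hM
    rw [abs_div, abs_mul, abs_of_pos hC, abs_of_pos (by positivity : 0 < c * (2*lam+C*M))]
    rw [div_le_div_iff₀ (by positivity) hden]
    have h := mul_le_mul_of_nonneg_left hu hC.le
    nlinarith [abs_nonneg u]
  refine ⟨main, fun u u' hu hu' => ?_⟩
  calc |artanh (C * u / (c * (2 * lam + C * M))) - artanh (C * u' / (c * (2 * lam + C * M)))|
      ≤ |artanh (C * u / (c * (2 * lam + C * M)))| + |artanh (C * u' / (c * (2 * lam + C * M)))| :=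
        abs_sub _ _
    _ ≤ (1/2) * Real.log (1 + C*M/lam) + (1/2) * Real.log (1 + C*M/lam) :=
        add_le_add (main u hu) (main u' hu')
    _ = Real.log (1 + C*M/lam) := by ring
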